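/- For any encoder f: 𝒳 → {1,…,M} and decoder g: {1,…,M} → ℳ(𝒳), the probability of not exceeding log-loss distortion D satisfies P(−log g(f(X))(X) ≤ D) ≤ P(X ∈ S) for some set S ⊆ 𝒳 with |S| ≤ M·⌊e^D⌋; consequently P(−log g(f(X))(X) ≤ D) ≤ Σ of the M·⌊e^D⌋ largest values of P_X. -/

import Mathlib

open Real Finset
open scoped Classical

/-- For any `M`-message scheme under logarithmic loss, the probability of not
exceeding level `D` (i.e. `q^(f(X))(X) ≥ e^{−D}`) is at most `P(X ∈ S)` for some
set `S` of at most `M⌊e^D⌋` symbols; hence it is at most the largest probability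
of any set of `M⌊e^D⌋` symbols. -/
theorem stmt_13 {α : Type*} [Fintype α] (M : ℕ)
    (pX : α → ℝ) (hp0 : ∀ x, 0 ≤ pX x) (hp1 : ∑ x, pX x = 1)
    (f : α → Fin M)
    (q : Fin M → α → ℝ)
    (hq0 : ∀ m x, 0 ≤ q m x) (hq1 : ∀ m, ∑ x, q m x = 1)
    (D : ℝ) (hD : 0 ≤ D) :
    (∃ S : Finset α, S.card ≤ M * ⌊Real.exp D⌋₊ ∧
        ∑ x ∈ univ.filter (fun x => Real.exp (-D) ≤ q (f x) x), pX x
          ≤ ∑ x ∈ S, pX x) ∧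
    ∑ x ∈ univ.filter (fun x => Real.exp (-D) ≤ q (f x) x), pX x
      ≤ sSup { s : ℝ | ∃ S : Finset α, S.card ≤ M * ⌊Real.exp D⌋₊ ∧
          s = ∑ x ∈ S, pX x } := by
  set S : Finset α := univ.filter (fun x => Real.exp (-D) ≤ q (f x) x) with hS
  set T : Fin M → Finset α := fun m => univ.filter (fun x => f x = m ∧ Real.exp (-D) ≤ q m x)
  have hTcard : ∀ m, (T m).card ≤ ⌊Real.exp D⌋₊ := by
    intro m
    have h1 : ((T m).card : ℝ) * Real.exp (-D) ≤ ∑ x ∈ T m, q m x := by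
      have := Finset.card_nsmul_le_sum (T m) (q m) (Real.exp (-D))
        (fun x hx => (Finset.mem_filter.mp hx).2.2)
      rwa [nsmul_eq_mul] at this
    have h2 : ∑ x ∈ T m, q m x ≤ 1 := by
      rw [← hq1 m]
      exact Finset.sum_le_sum_of_subset_of_nonneg (Finset.subset_univ _)
        (fun x _ _ => hq0 m x)
    have h3 : ((T m).card : ℝ) ≤ Real.exp D := by
      have := h1.trans h2
      rw [Real.exp_neg] at this
      have hpos := Real.exp_pos D
      rw [← div_eq_mul_inv, div_le_one hpos] at this
      exact this
    exact Nat.le_floor h3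
  have hScard : S.card ≤ M * ⌊Real.exp D⌋₊ := by
    have hsub : S ⊆ Finset.univ.biUnion T := by
      intro x hx
      rw [hS, Finset.mem_filter] at hx
      exact Finset.mem_biUnion.mpr ⟨f x, Finset.mem_univ _,
        Finset.mem_filter.mpr ⟨Finset.mem_univ _, rfl, hx.2⟩⟩
    calc S.card ≤ (Finset.univ.biUnion T).card := Finset.card_le_card hsub
      _ ≤ ∑ m, (T m).card := Finset.card_biUnion_le
      _ ≤ ∑ _m : Fin M, ⌊Real.exp D⌋₊ := Finset.sum_le_sum (fun m _ => hTcard m)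
      _ = M * ⌊Real.exp D⌋₊ := by simp [mul_comm]
  refine ⟨⟨S, hScard, le_refl _⟩, ?_⟩
  apply le_csSup
  · refine ⟨1, ?_⟩
    rintro s ⟨S', _, rfl⟩
    rw [← hp1]
    exact Finset.sum_le_sum_of_subset_of_nonneg (Finset.subset_univ _)
      (fun x _ _ => hp0 x)
  · exact ⟨S, hScard, rfl⟩
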